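/- Let A and B be n×n complex unitary matrices such that A ⊗ Ā = B ⊗ B̄, where Ā denotes entrywise complex conjugation. Then there exists a complex number λ with |λ| = 1 such that B = λ A. -/

import Mathlib

open Matrix

/-- Two complex unitary matrices with `A ⊗ Ā = B ⊗ B̄` agree up to a
phase `λ` with `|λ| = 1`. -/
theorem exists_phase_of_kronecker_conj_eq
    (n : ℕ) (hn : 0 < n) (A B : Matrix (Fin n) (Fin n) ℂ)
    (hA₁ : A * Aᴴ = 1) (hA₂ : Aᴴ * A = 1)
    (hB₁ : B * Bᴴ = 1) (hB₂ : Bᴴ * B = 1)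
    (h : ∀ i k j l, A i j * (starRingEnd ℂ) (A k l) = B i j * (starRingEnd ℂ) (B k l)) :
    ∃ lam : ℂ, ‖lam‖ = 1 ∧ B = lam • A := by
  -- A has a nonzero entry
  have hA0 : ∃ i j, A i j ≠ 0 := by
    by_contra hc
    push_neg at hc
    have hA : A = 0 := by ext i j; exact hc i j
    rw [hA] at hA₂
    simp at hA₂
    have h01 := congrFun (congrFun hA₂ ⟨0, hn⟩) ⟨0, hn⟩
    simp [Matrix.one_apply] at h01
  obtain ⟨i0, j0, hA0⟩ := hA0
  have habs : A i0 j0 * (starRingEnd ℂ) (A i0 j0) = B i0 j0 * (starRingEnd ℂ) (B i0 j0) :=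
    h i0 i0 j0 j0
  have hB0 : B i0 j0 ≠ 0 := by
    intro hb
    apply hA0
    have h0 : A i0 j0 * (starRingEnd ℂ) (A i0 j0) = 0 := by rw [habs, hb]; ring
    rw [Complex.mul_conj] at h0
    have : Complex.normSq (A i0 j0) = 0 := by exact_mod_cast h0
    exact Complex.normSq_eq_zero.mp this
  have hBc : (starRingEnd ℂ) (B i0 j0) ≠ 0 := by simpa using hB0
  refine ⟨(starRingEnd ℂ) (A i0 j0) / (starRingEnd ℂ) (B i0 j0), ?_, ?_⟩
  · have hab : ‖A i0 j0‖ = ‖B i0 j0‖ := by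
      have h2 := congrArg (‖·‖) habs
      simp only [norm_mul, Complex.norm_conj] at h2
      have ha := norm_nonneg (A i0 j0)
      have hb := norm_nonneg (B i0 j0)
      nlinarith [h2]
    rw [norm_div]
    simp only [Complex.norm_conj, hab]
    exact div_self (norm_ne_zero_iff.mpr hB0)
  · ext i j
    have hij := h i i0 j j0
    simp only [Matrix.smul_apply, smul_eq_mul]
    field_simp
    rw [← hij]
    ring
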